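/- Suppose for each n ∈ ℤ the symbol Z_n(κR) satisfies |Z_n(κR)|² ≤ (1+|κR|²)(1+n²). Then for all s ≥ 1/2, w ∈ H^s(S_R) and v ∈ H^{1/2}(S_R) (with S_R ⊂ ℝ² the circle of radius R), the DtN truncation error satisfies |((T_κ − T_{κ,N})w, v)_{S_R}| ≤ (1+|κR|²)^{1/2} R^{−1} (1+N²)^{−(2s−1)/4} ‖w‖_{H^s(S_R)} ‖v‖_{H^{1/2}(S_R)}. -/

import Mathlib

open ComplexConjugate

lemma tsum_cauchy_schwarz' {ι : Type*} (a b : ι → ℝ) (ha0 : ∀ i, 0 ≤ a i)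
    (hb0 : ∀ i, 0 ≤ b i) (ha : Summable fun i => a i ^ 2)
    (hb : Summable fun i => b i ^ 2) :
    ∑' i, a i * b i ≤ Real.sqrt (∑' i, a i ^ 2) * Real.sqrt (∑' i, b i ^ 2) := by
  have hab : Summable fun i => a i * b i := by
    refine Summable.of_nonneg_of_le (fun i => mul_nonneg (ha0 i) (hb0 i))
      (fun i => ?_) ((ha.add hb).div_const 2)
    nlinarith [sq_nonneg (a i - b i)]
  refine Summable.tsum_le_of_sum_le hab (fun t => ?_)
  have h1 : (∑ i ∈ t, a i * b i) ^ 2 ≤ (∑ i ∈ t, a i ^ 2) * ∑ i ∈ t, b i ^ 2 :=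
    Finset.sum_mul_sq_le_sq_mul_sq t a b
  have h2 : ∑ i ∈ t, a i * b i ≤ Real.sqrt ((∑ i ∈ t, a i ^ 2) * ∑ i ∈ t, b i ^ 2) := by
    have := Real.sqrt_le_sqrt h1
    rwa [Real.sqrt_sq (Finset.sum_nonneg (fun i _ => mul_nonneg (ha0 i) (hb0 i)))] at this
  refine h2.trans ?_
  rw [Real.sqrt_mul (Finset.sum_nonneg (fun i _ => sq_nonneg _))]
  gcongr
  · exact Summable.sum_le_tsum t (fun i _ => sq_nonneg _) ha
  · exact Summable.sum_le_tsum t (fun i _ => sq_nonneg _) hb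

/-- truncation error estimate for the two-dimensional DtN operator
(Lemma on `((T_κ − T_{κ,N})w, v)_{S_R}` in the circular-harmonic Fourier scale).
Functions on `S_R ⊂ ℝ²` are represented by their Fourier coefficient sequences
`w v : ℤ → ℂ`; the Sobolev norm is `‖v‖²_{H^s} = R Σ_n (1+n²)^s|v_n|²` and the pairing
`((T_κ − T_{κ,N})w, v)_{S_R} = Σ_{|n|>N} Z_n(κR) w_n conj(v_n)`.  Under the symbol
bound `|Z_n(κR)|² ≤ (1+|κR|²)(1+n²)` one has, for `s ≥ 1/2`,
`|((T_κ − T_{κ,N})w, v)| ≤ (1+|κR|²)^{1/2} R⁻¹ (1+N²)^{−(2s−1)/4} ‖w‖_{H^s}‖v‖_{H^{1/2}}`. -/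
theorem stmt_12 (R κ : ℝ) (hR : 0 < R) (s : ℝ) (hs : 1 / 2 ≤ s) (N : ℕ)
    (Z : ℤ → ℂ)
    (hZ : ∀ n : ℤ, ‖Z n‖ ^ 2 ≤ (1 + |κ * R| ^ 2) * (1 + (n : ℝ) ^ 2))
    (w v : ℤ → ℂ)
    (hw : Summable (fun n : ℤ => (1 + (n : ℝ) ^ 2) ^ s * ‖w n‖ ^ 2))
    (hv : Summable (fun n : ℤ => (1 + (n : ℝ) ^ 2) ^ ((1 : ℝ) / 2) * ‖v n‖ ^ 2)) :
    ‖∑' n : {n : ℤ // (N : ℤ) < |n|}, Z (n : ℤ) * w (n : ℤ) * conj (v (n : ℤ))‖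
      ≤ Real.sqrt (1 + |κ * R| ^ 2) / R / (1 + (N : ℝ) ^ 2) ^ ((2 * s - 1) / 4)
        * Real.sqrt (R * ∑' n : ℤ, (1 + (n : ℝ) ^ 2) ^ s * ‖w n‖ ^ 2)
        * Real.sqrt (R * ∑' n : ℤ, (1 + (n : ℝ) ^ 2) ^ ((1 : ℝ) / 2) * ‖v n‖ ^ 2) := by
  set S : Set ℤ := {n : ℤ | (N : ℤ) < |n|} with hS
  set e : ℝ := (2 * s - 1) / 4 with he_def
  have he : 0 ≤ e := by rw [he_def]; linarith
  set C : ℝ := Real.sqrt (1 + |κ * R| ^ 2) with hC_def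
  have hC0 : 0 ≤ C := Real.sqrt_nonneg _
  set D : ℝ := (1 + (N : ℝ) ^ 2) ^ e with hD_def
  have hD0 : 0 < D := Real.rpow_pos_of_pos (by positivity) _
  set K : ℝ := C / D with hK_def
  have hK0 : 0 ≤ K := div_nonneg hC0 hD0.le
  -- functions
  set fw : ℤ → ℝ := fun n => (1 + (n : ℝ) ^ 2) ^ s * ‖w n‖ ^ 2 with hfw
  set fv : ℤ → ℝ := fun n => (1 + (n : ℝ) ^ 2) ^ ((1 : ℝ) / 2) * ‖v n‖ ^ 2 with hfv
  set a : S → ℝ := fun n => (1 + ((n : ℤ) : ℝ) ^ 2) ^ (s / 2) * ‖w (n : ℤ)‖ with ha_def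
  set b : S → ℝ := fun n => (1 + ((n : ℤ) : ℝ) ^ 2) ^ ((1 : ℝ) / 4) * ‖v (n : ℤ)‖ with hb_def
  have ha0 : ∀ n : S, 0 ≤ a n := fun n => mul_nonneg (Real.rpow_nonneg (by positivity) _) (norm_nonneg _)
  have hb0 : ∀ n : S, 0 ≤ b n := fun n => mul_nonneg (Real.rpow_nonneg (by positivity) _) (norm_nonneg _)
  have ht0 : ∀ n : ℤ, (0:ℝ) < 1 + (n : ℝ) ^ 2 := fun n => by positivity
  have ha2 : ∀ n : S, a n ^ 2 = fw (n : ℤ) := by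
    intro n
    rw [ha_def, hfw, mul_pow, ← Real.rpow_natCast ((1 + ((n : ℤ) : ℝ) ^ 2) ^ (s/2)) 2,
      ← Real.rpow_mul (ht0 _).le]
    norm_num
  have hb2 : ∀ n : S, b n ^ 2 = fv (n : ℤ) := by
    intro n
    rw [hb_def, hfv, mul_pow, ← Real.rpow_natCast ((1 + ((n : ℤ) : ℝ) ^ 2) ^ ((1:ℝ)/4)) 2,
      ← Real.rpow_mul (ht0 _).le]
    norm_num
  have hsa : Summable fun n : S => a n ^ 2 := by
    have := hw.subtype S
    exact this.congr (fun n => (ha2 n).symm)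
  have hsb : Summable fun n : S => b n ^ 2 := by
    have := hv.subtype S
    exact this.congr (fun n => (hb2 n).symm)
  -- key termwise bound
  have hkey : ∀ n : S, ‖Z (n : ℤ) * w (n : ℤ) * conj (v (n : ℤ))‖ ≤ K * (a n * b n) := by
    intro n
    set t : ℝ := 1 + ((n : ℤ) : ℝ) ^ 2 with ht_def
    have ht1 : (1:ℝ) ≤ t := le_add_of_nonneg_right (sq_nonneg _)
    have htpos : (0:ℝ) < t := ht0 _
    have hZn : ‖Z (n : ℤ)‖ ≤ C * t ^ ((1:ℝ)/2) := by
      have h := Real.sqrt_le_sqrt (hZ (n : ℤ))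
      rw [Real.sqrt_sq (norm_nonneg _), Real.sqrt_mul (by positivity)] at h
      rw [← Real.sqrt_eq_rpow]
      exact h
    have htN : (1 : ℝ) + (N : ℝ) ^ 2 ≤ t := by
      have h := n.2
      simp only [hS, Set.mem_setOf_eq] at h
      have h2 : ((N : ℤ)) ^ 2 ≤ ((n : ℤ)) ^ 2 := by
        nlinarith [sq_abs ((n : ℤ)), h, Int.natCast_nonneg N, abs_nonneg ((n : ℤ))]
      have h3 : ((N : ℝ)) ^ 2 ≤ (((n : ℤ) : ℝ)) ^ 2 := by exact_mod_cast h2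
      rw [ht_def]; linarith
    have hDt : D ≤ t ^ e := Real.rpow_le_rpow (by positivity) htN he
    have hsplit : t ^ (s / 2) * t ^ ((1:ℝ)/4) = t ^ ((1:ℝ)/2) * t ^ e := by
      rw [← Real.rpow_add htpos, ← Real.rpow_add htpos, he_def]
      ring_nf
    have hnorm : ‖Z (n : ℤ) * w (n : ℤ) * conj (v (n : ℤ))‖
        = ‖Z (n : ℤ)‖ * ‖w (n : ℤ)‖ * ‖v (n : ℤ)‖ := by
      rw [norm_mul, norm_mul]
      congr 1
      exact norm_star _
    rw [hnorm]
    have hab : a n * b n = t ^ ((1:ℝ)/2) * t ^ e * (‖w (n : ℤ)‖ * ‖v (n : ℤ)‖) := by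
      rw [show a n = t ^ (s / 2) * ‖w (n : ℤ)‖ from rfl,
        show b n = t ^ ((1:ℝ)/4) * ‖v (n : ℤ)‖ from rfl, ← hsplit]
      ring
    rw [hab, hK_def]
    have h1 : ‖Z (n : ℤ)‖ * ‖w (n : ℤ)‖ * ‖v (n : ℤ)‖
        ≤ C * t ^ ((1:ℝ)/2) * (‖w (n : ℤ)‖ * ‖v (n : ℤ)‖) := by
      have := mul_le_mul_of_nonneg_right hZn
        (mul_nonneg (norm_nonneg (w (n : ℤ))) (norm_nonneg (v (n : ℤ))))
      linarith [this]
    refine h1.trans ?_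
    rw [div_mul_eq_mul_div, le_div_iff₀ hD0]
    have htpow : (0:ℝ) ≤ t ^ ((1:ℝ)/2) := Real.rpow_nonneg htpos.le _
    calc C * t ^ ((1:ℝ)/2) * (‖w (n : ℤ)‖ * ‖v (n : ℤ)‖) * D
        ≤ C * t ^ ((1:ℝ)/2) * (‖w (n : ℤ)‖ * ‖v (n : ℤ)‖) * t ^ e :=
          mul_le_mul_of_nonneg_left hDt (mul_nonneg (mul_nonneg hC0 htpow)
            (mul_nonneg (norm_nonneg _) (norm_nonneg _)))
      _ = C * (t ^ ((1:ℝ)/2) * t ^ e * (‖w (n : ℤ)‖ * ‖v (n : ℤ)‖)) := by ring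
  -- summability
  have hsab : Summable fun n : S => a n * b n := by
    refine Summable.of_nonneg_of_le (fun n => mul_nonneg (ha0 n) (hb0 n))
      (fun n => ?_) ((hsa.add hsb).div_const 2)
    nlinarith [sq_nonneg (a n - b n)]
  have hsKab : Summable fun n : S => K * (a n * b n) := hsab.mul_left K
  have hsnorm : Summable fun n : S => ‖Z (n : ℤ) * w (n : ℤ) * conj (v (n : ℤ))‖ :=
    Summable.of_nonneg_of_le (fun n => norm_nonneg _) hkey hsKab
  -- tsum subtype bounds
  have hA' : ∑' n : S, a n ^ 2 ≤ ∑' n : ℤ, fw n := by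
    have h1 : ∑' n : S, a n ^ 2 = ∑' n : ℤ, S.indicator fw n := by
      rw [tsum_congr ha2]; exact tsum_subtype S fw
    rw [h1]
    refine Summable.tsum_le_tsum (fun n => ?_) (hw.indicator S) hw
    exact Set.indicator_le_self' (fun n _ => by positivity) n
  have hB' : ∑' n : S, b n ^ 2 ≤ ∑' n : ℤ, fv n := by
    have h1 : ∑' n : S, b n ^ 2 = ∑' n : ℤ, S.indicator fv n := by
      rw [tsum_congr hb2]; exact tsum_subtype S fv
    rw [h1]
    refine Summable.tsum_le_tsum (fun n => ?_) (hv.indicator S) hv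
    exact Set.indicator_le_self' (fun n _ => by positivity) n
  have hAnn : 0 ≤ ∑' n : ℤ, fw n := tsum_nonneg (fun n => by positivity)
  have hBnn : 0 ≤ ∑' n : ℤ, fv n := tsum_nonneg (fun n => by positivity)
  -- RHS rewriting
  have hrhs : C / R / D * Real.sqrt (R * ∑' n : ℤ, fw n) * Real.sqrt (R * ∑' n : ℤ, fv n)
      = K * (Real.sqrt (∑' n : ℤ, fw n) * Real.sqrt (∑' n : ℤ, fv n)) := by
    have hsq : Real.sqrt R ^ 2 = R := Real.sq_sqrt hR.le
    rw [Real.sqrt_mul hR.le, Real.sqrt_mul hR.le, hK_def, div_div,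
      div_mul_eq_mul_div, div_mul_eq_mul_div, div_mul_eq_mul_div,
      div_eq_div_iff (by positivity) (by positivity)]
    linear_combination C * Real.sqrt (∑' n : ℤ, fw n) * Real.sqrt (∑' n : ℤ, fv n) * D * hsq
  calc ‖∑' n : S, Z (n : ℤ) * w (n : ℤ) * conj (v (n : ℤ))‖
      ≤ ∑' n : S, ‖Z (n : ℤ) * w (n : ℤ) * conj (v (n : ℤ))‖ := norm_tsum_le_tsum_norm hsnorm
    _ ≤ ∑' n : S, K * (a n * b n) := Summable.tsum_le_tsum hkey hsnorm hsKab
    _ = K * ∑' n : S, a n * b n := tsum_mul_left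
    _ ≤ K * (Real.sqrt (∑' n : S, a n ^ 2) * Real.sqrt (∑' n : S, b n ^ 2)) :=
        mul_le_mul_of_nonneg_left (tsum_cauchy_schwarz' a b ha0 hb0 hsa hsb) hK0
    _ ≤ K * (Real.sqrt (∑' n : ℤ, fw n) * Real.sqrt (∑' n : ℤ, fv n)) :=
        mul_le_mul_of_nonneg_left
          (mul_le_mul (Real.sqrt_le_sqrt hA') (Real.sqrt_le_sqrt hB')
            (Real.sqrt_nonneg _) (Real.sqrt_nonneg _)) hK0
    _ = C / R / D * Real.sqrt (R * ∑' n : ℤ, fw n) * Real.sqrt (R * ∑' n : ℤ, fv n) := hrhs.symm
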